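/- For all r > 0 and ε > 0, the random variables sup_{t ∈ [0,T]} ‖ X_n(t) · 𝟙_{[0, ρ_∞^{(r)} ∧ ρ_n^{(r+ε)}]}(t) − X_∞(t) · 𝟙_{[0, ρ_∞^{(r)}]}(t) ‖ converge to 0 in probability as n → ∞. -/

import Mathlib

open MeasureTheory Filter Set

section Aux

variable {E : Type*} [NormedAddCommGroup E] {f : ℝ → E} {σ T a b : ℝ}

private lemma aux_lb (hT : 0 < T) :
    (0:ℝ) ∈ lowerBounds ({t : ℝ | t ∈ Set.Ioo 0 σ ∧ a < ‖f t‖} ∪ {T}) := by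
  rintro t (⟨⟨h0, _⟩, _⟩ | rfl)
  · exact h0.le
  · exact hT.le

private lemma aux_bddBelow (hT : 0 < T) :
    BddBelow ({t : ℝ | t ∈ Set.Ioo 0 σ ∧ a < ‖f t‖} ∪ {T}) :=
  ⟨0, aux_lb hT⟩

private lemma aux_nonneg (hT : 0 < T) :
    0 ≤ sInf ({t : ℝ | t ∈ Set.Ioo 0 σ ∧ a < ‖f t‖} ∪ {T}) :=
  le_csInf ⟨T, Or.inr rfl⟩ (aux_lb hT)

private lemma aux_le_T (hT : 0 < T) :
    sInf ({t : ℝ | t ∈ Set.Ioo 0 σ ∧ a < ‖f t‖} ∪ {T}) ≤ T :=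
  csInf_le (aux_bddBelow hT) (Or.inr rfl)

private lemma aux_mono (hT : 0 < T) (hab : a ≤ b) :
    sInf ({t : ℝ | t ∈ Set.Ioo 0 σ ∧ a < ‖f t‖} ∪ {T})
      ≤ sInf ({t : ℝ | t ∈ Set.Ioo 0 σ ∧ b < ‖f t‖} ∪ {T}) := by
  refine csInf_le_csInf (aux_bddBelow hT) ⟨T, Or.inr rfl⟩ ?_
  rintro t (⟨ht, hbt⟩ | rfl)
  · exact Or.inl ⟨ht, lt_of_le_of_lt hab hbt⟩
  · exact Or.inr rfl

private lemma aux_lt_sigma (hσ : σ ∈ Set.Ioc 0 T) (hσT : σ < T)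
    (hexpl : ∀ M : ℝ, ∃ᶠ t in nhdsWithin σ (Set.Iio σ), M < ‖f t‖) :
    sInf ({t : ℝ | t ∈ Set.Ioo 0 σ ∧ a < ‖f t‖} ∪ {T}) < σ := by
  have hev : ∀ᶠ t in nhdsWithin σ (Set.Iio σ), t ∈ Set.Ioo 0 σ := by
    have h1 : ∀ᶠ t in nhdsWithin σ (Set.Iio σ), t ∈ Set.Iio σ := self_mem_nhdsWithin
    have h2 : ∀ᶠ t in nhdsWithin σ (Set.Iio σ), t ∈ Set.Ioi (0:ℝ) :=
      eventually_nhdsWithin_of_eventually_nhds (isOpen_Ioi.eventually_mem hσ.1)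
    filter_upwards [h1, h2] with t ht1 ht2 using ⟨ht2, ht1⟩
  obtain ⟨t, hft, ht⟩ := ((hexpl a).and_eventually hev).exists
  calc sInf ({t : ℝ | t ∈ Set.Ioo 0 σ ∧ a < ‖f t‖} ∪ {T}) ≤ t :=
        csInf_le (aux_bddBelow (hσ.1.trans_le hσ.2)) (Or.inl ⟨ht, hft⟩)
    _ < σ := ht.2


private lemma aux_le_sigma (hσ : σ ∈ Set.Ioc 0 T)
    (hexpl : σ < T → ∀ M : ℝ, ∃ᶠ t in nhdsWithin σ (Set.Iio σ), M < ‖f t‖) :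
    sInf ({t : ℝ | t ∈ Set.Ioo 0 σ ∧ a < ‖f t‖} ∪ {T}) ≤ σ := by
  rcases eq_or_lt_of_le hσ.2 with hσT | hσT
  · exact (aux_le_T (hσ.1.trans_le hσ.2)).trans hσT.ge
  · exact (aux_lt_sigma hσ hσT (hexpl hσT)).le

private lemma aux_lt_sigma_of_lt_T (hσ : σ ∈ Set.Ioc 0 T)
    (hexpl : σ < T → ∀ M : ℝ, ∃ᶠ t in nhdsWithin σ (Set.Iio σ), M < ‖f t‖)
    (hlt : sInf ({t : ℝ | t ∈ Set.Ioo 0 σ ∧ a < ‖f t‖} ∪ {T}) < T) :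
    sInf ({t : ℝ | t ∈ Set.Ioo 0 σ ∧ a < ‖f t‖} ∪ {T}) < σ := by
  rcases eq_or_lt_of_le hσ.2 with hσT | hσT
  · exact hlt.trans_le hσT.ge
  · exact aux_lt_sigma hσ hσT (hexpl hσT)

/-- If the hitting time is `< T`, then the norm at the hitting time is ≥ the threshold. -/
private lemma aux_hit (hσ : σ ∈ Set.Ioc 0 T)
    (hcont : ContinuousOn f (Set.Ico 0 σ))
    (hexpl : σ < T → ∀ M : ℝ, ∃ᶠ t in nhdsWithin σ (Set.Iio σ), M < ‖f t‖)
    (hlt : sInf ({t : ℝ | t ∈ Set.Ioo 0 σ ∧ a < ‖f t‖} ∪ {T}) < T) :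
    a ≤ ‖f (sInf ({t : ℝ | t ∈ Set.Ioo 0 σ ∧ a < ‖f t‖} ∪ {T}))‖ := by
  have hT : 0 < T := hσ.1.trans_le hσ.2
  set ρ := sInf ({t : ℝ | t ∈ Set.Ioo 0 σ ∧ a < ‖f t‖} ∪ {T}) with hρdef
  have hρσ : ρ < σ := aux_lt_sigma_of_lt_T hσ hexpl hlt
  have hρmem : ρ ∈ Set.Ico 0 σ := ⟨aux_nonneg hT, hρσ⟩
  by_contra hcon
  push_neg at hcon
  have hc : ContinuousWithinAt f (Set.Ico 0 σ) ρ := hcont ρ hρmem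
  have hev : {t : ℝ | ‖f t‖ < a} ∈ nhdsWithin ρ (Set.Ico 0 σ) :=
    ((continuous_norm.tendsto (f ρ)).comp hc) (Iio_mem_nhds hcon)
  obtain ⟨η, hη, hball⟩ := Metric.mem_nhdsWithin_iff.1 hev
  have hb : ρ < min (ρ + η) T := lt_min (by linarith) hlt
  obtain ⟨t, ht, htb⟩ := exists_lt_of_csInf_lt ⟨T, Or.inr rfl⟩ hb
  have htT : t < T := htb.trans_le (min_le_right _ _)
  rcases ht with ht | rfl
  · have hρt : ρ ≤ t := csInf_le (aux_bddBelow hT) (Or.inl ht)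
    have htball : t ∈ Metric.ball ρ η := by
      rw [Metric.mem_ball, Real.dist_eq, abs_of_nonneg (by linarith)]
      have := htb.trans_le (min_le_left _ _)
      linarith
    have : ‖f t‖ < a := hball ⟨htball, ht.1.1.le, ht.1.2⟩
    exact absurd ht.2 (not_lt.2 this.le)
  · exact absurd htT (lt_irrefl _)

/-- Strictly before the hitting time, the norm is ≤ the threshold. -/
private lemma aux_below (hσ : σ ∈ Set.Ioc 0 T)
    (hcont : ContinuousOn f (Set.Ico 0 σ))
    (hexpl : σ < T → ∀ M : ℝ, ∃ᶠ t in nhdsWithin σ (Set.Iio σ), M < ‖f t‖)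
    {s : ℝ} (hs0 : 0 ≤ s)
    (hs : s < sInf ({t : ℝ | t ∈ Set.Ioo 0 σ ∧ a < ‖f t‖} ∪ {T})) :
    ‖f s‖ ≤ a := by
  have hT : 0 < T := hσ.1.trans_le hσ.2
  set ρ := sInf ({t : ℝ | t ∈ Set.Ioo 0 σ ∧ a < ‖f t‖} ∪ {T}) with hρdef
  have hρσ : ρ ≤ σ := aux_le_sigma hσ hexpl
  have hsσ : s < σ := lt_of_lt_of_le hs hρσ
  by_contra hcon
  push_neg at hcon
  rcases eq_or_lt_of_le hs0 with rfl | hs0'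
  · -- s = 0 : use continuity at 0
    have hc : ContinuousWithinAt f (Set.Ico 0 σ) 0 := hcont 0 ⟨le_refl _, hsσ⟩
    have hev : {t : ℝ | a < ‖f t‖} ∈ nhdsWithin 0 (Set.Ico 0 σ) :=
      ((continuous_norm.tendsto (f 0)).comp hc) (Ioi_mem_nhds hcon)
    obtain ⟨η, hη, hball⟩ := Metric.mem_nhdsWithin_iff.1 hev
    set t := min (η / 2) (min (σ / 2) (ρ / 2)) with htdef
    have ht0 : 0 < t := lt_min (by linarith) (lt_min (by linarith) (by linarith))
    have htσ : t < σ := lt_of_le_of_lt ((min_le_right _ _).trans (min_le_left _ _)) (by linarith)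
    have htρ : t < ρ := lt_of_le_of_lt ((min_le_right _ _).trans (min_le_right _ _)) (by linarith)
    have htball : t ∈ Metric.ball (0:ℝ) η := by
      rw [Metric.mem_ball, Real.dist_eq, sub_zero, abs_of_pos ht0]
      exact lt_of_le_of_lt (min_le_left _ _) (by linarith)
    have hta : a < ‖f t‖ := hball ⟨htball, ht0.le, htσ⟩
    have : ρ ≤ t := csInf_le (aux_bddBelow hT) (Or.inl ⟨⟨ht0, htσ⟩, hta⟩)
    exact absurd htρ (not_lt.2 this)
  · have : ρ ≤ s := csInf_le (aux_bddBelow hT) (Or.inl ⟨⟨hs0', hsσ⟩, hcon⟩)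
    exact absurd hs (not_lt.2 this)

end Aux

theorem stmt_3
    {Ω : Type*} [MeasurableSpace Ω] (P : Measure Ω) [IsProbabilityMeasure P]
    {E : Type*} [NormedAddCommGroup E] [NormedSpace ℝ E] [CompleteSpace E]
    [MeasurableSpace E] [BorelSpace E]
    (T : ℝ) (hT : 0 < T)
    -- the explosion times σ_n (n ∈ ℕ) and σ_∞
    (σ : ℕ → Ω → ℝ) (σi : Ω → ℝ)
    (hσmeas : ∀ n, Measurable (σ n)) (hσimeas : Measurable σi)
    (hσmem : ∀ n ω, σ n ω ∈ Set.Ioc 0 T) (hσimem : ∀ ω, σi ω ∈ Set.Ioc 0 T)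
    -- the processes X_n (n ∈ ℕ) and X_∞, jointly measurable
    (X : ℕ → ℝ → Ω → E) (Xi : ℝ → Ω → E)
    (hXmeas : ∀ n, Measurable fun p : ℝ × Ω => X n p.1 p.2)
    (hXimeas : Measurable fun p : ℝ × Ω => Xi p.1 p.2)
    -- path continuity on [0, σ_n(ω)), and on [0,T] if σ_n(ω) = T
    (hXcont : ∀ n ω, ContinuousOn (fun t => X n t ω) (Set.Ico 0 (σ n ω)))
    (hXcontT : ∀ n ω, σ n ω = T → ContinuousOn (fun t => X n t ω) (Set.Icc 0 T))
    (hXicont : ∀ ω, ContinuousOn (fun t => Xi t ω) (Set.Ico 0 (σi ω)))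
    (hXicontT : ∀ ω, σi ω = T → ContinuousOn (fun t => Xi t ω) (Set.Icc 0 T))
    -- σ_n is an explosion time: on {σ_n < T}, limsup_{t ↑ σ_n} ‖X_n(t)‖ = ∞
    (hexpl : ∀ n ω, σ n ω < T →
      ∀ M : ℝ, ∃ᶠ t in nhdsWithin (σ n ω) (Set.Iio (σ n ω)), M < ‖X n t ω‖)
    (hexpli : ∀ ω, σi ω < T →
      ∀ M : ℝ, ∃ᶠ t in nhdsWithin (σi ω) (Set.Iio (σi ω)), M < ‖Xi t ω‖)
    -- the stopping times ρ_n^{(r)} = inf { t ∈ (0, σ_n) : ‖X_n(t)‖ > r }, inf ∅ := T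
    (ρ : ℕ → ℝ → Ω → ℝ) (ρi : ℝ → Ω → ℝ)
    (hρ : ∀ n r ω, ρ n r ω = sInf ({t : ℝ | t ∈ Set.Ioo 0 (σ n ω) ∧ r < ‖X n t ω‖} ∪ {T}))
    (hρi : ∀ r ω, ρi r ω = sInf ({t : ℝ | t ∈ Set.Ioo 0 (σi ω) ∧ r < ‖Xi t ω‖} ∪ {T}))
    -- the globally defined processes X_n^{(r)} (denoted Y n r) and X_∞^{(r)} (denoted Yi r)
    (Y : ℕ → ℝ → ℝ → Ω → E) (Yi : ℝ → ℝ → Ω → E)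
    (hYmeas : ∀ n r, Measurable fun p : ℝ × Ω => Y n r p.1 p.2)
    (hYimeas : ∀ r, Measurable fun p : ℝ × Ω => Yi r p.1 p.2)
    (hYcont : ∀ n r ω, Continuous fun t => Y n r t ω)
    (hYicont : ∀ r ω, Continuous fun t => Yi r t ω)
    -- assumption (a)
    (ha : ∀ n r, 0 < r → ∀ᵐ ω ∂P, ∀ t ∈ Set.Icc 0 (ρ n r ω), Y n r t ω = X n t ω)
    (hai : ∀ r, 0 < r → ∀ᵐ ω ∂P, ∀ t ∈ Set.Icc 0 (ρi r ω), Yi r t ω = Xi t ω)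
    -- assumption (b): X_n^{(r)} → X_∞^{(r)} in L⁰(Ω; C([0,T]; E))
    (hb : ∀ r, 0 < r → TendstoInMeasure P
      (fun n ω => ⨆ t : Set.Icc (0:ℝ) T, ‖Y n r (t : ℝ) ω - Yi r (t : ℝ) ω‖)
      atTop (fun _ => (0 : ℝ)))    :
    ∀ r > (0:ℝ), ∀ ε > (0:ℝ),
      TendstoInMeasure P
        (fun n ω => ⨆ t : Set.Icc (0:ℝ) T,
          ‖Set.indicator (Set.Icc 0 (min (ρi r ω) (ρ n (r + ε) ω))) (fun s => X n s ω) (t : ℝ)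
            - Set.indicator (Set.Icc 0 (ρi r ω)) (fun s => Xi s ω) (t : ℝ)‖)
        atTop (fun _ => (0 : ℝ)) := by
  intro r hr ε hε
  rw [tendstoInMeasure_iff_dist]
  intro δ hδ
  have hr' : (0:ℝ) < r + ε := by linarith
  have hmin : (0:ℝ) < min ε δ := lt_min hε hδ
  have hGae : ∀ᵐ ω ∂P, (∀ m, ∀ t ∈ Set.Icc 0 (ρ m (r+ε) ω), Y m (r+ε) t ω = X m t ω)
      ∧ (∀ t ∈ Set.Icc 0 (ρi (r+ε) ω), Yi (r+ε) t ω = Xi t ω) :=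
    (ae_all_iff.2 fun m => ha m (r+ε) hr').and (hai (r+ε) hr')
  have hBtend := tendstoInMeasure_iff_dist.1 (hb (r+ε) hr') (min ε δ) hmin
  have key : ∀ n ω,
      (∀ m, ∀ t ∈ Set.Icc 0 (ρ m (r+ε) ω), Y m (r+ε) t ω = X m t ω) →
      (∀ t ∈ Set.Icc 0 (ρi (r+ε) ω), Yi (r+ε) t ω = Xi t ω) →
      δ ≤ dist (⨆ t : Set.Icc (0:ℝ) T,
          ‖Set.indicator (Set.Icc 0 (min (ρi r ω) (ρ n (r + ε) ω))) (fun s => X n s ω) (t : ℝ)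
            - Set.indicator (Set.Icc 0 (ρi r ω)) (fun s => Xi s ω) (t : ℝ)‖) 0 →
      min ε δ ≤ dist (⨆ t : Set.Icc (0:ℝ) T,
          ‖Y n (r+ε) (t : ℝ) ω - Yi (r+ε) (t : ℝ) ω‖) 0 := by
    intro n ω hGn hGi hA
    by_contra hB
    push_neg at hB
    set Ysup := ⨆ t : Set.Icc (0:ℝ) T, ‖Y n (r+ε) (t:ℝ) ω - Yi (r+ε) (t:ℝ) ω‖ with hYsupdef
    have hYsup_lt : Ysup < min ε δ :=
      lt_of_le_of_lt (le_abs_self _) (by rwa [Real.dist_0_eq_abs] at hB)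
    haveI : Nonempty (Set.Icc (0:ℝ) T) := ⟨⟨0, le_refl 0, hT.le⟩⟩
    have hbdd : BddAbove (Set.range fun t : Set.Icc (0:ℝ) T =>
        ‖Y n (r+ε) (t:ℝ) ω - Yi (r+ε) (t:ℝ) ω‖) := by
      have hc : ContinuousOn (fun t : ℝ => ‖Y n (r+ε) t ω - Yi (r+ε) t ω‖) (Set.Icc 0 T) :=
        (((hYcont n (r+ε) ω).sub (hYicont (r+ε) ω)).norm).continuousOn
      have h2 := (isCompact_Icc.image_of_continuousOn hc).bddAbove
      rwa [Set.image_eq_range] at h2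
    have hle_sup : ∀ s, s ∈ Set.Icc (0:ℝ) T →
        ‖Y n (r+ε) s ω - Yi (r+ε) s ω‖ ≤ Ysup := fun s hs => le_ciSup hbdd ⟨s, hs⟩
    have hρn_nonneg : 0 ≤ ρ n (r+ε) ω := by rw [hρ]; exact aux_nonneg hT
    have hρi_leT : ρi r ω ≤ T := by rw [hρi]; exact aux_le_T hT
    have hρi_mono : ρi r ω ≤ ρi (r+ε) ω := by
      rw [hρi, hρi]; exact aux_mono hT (by linarith)
    have hstep1 : ρi r ω ≤ ρ n (r+ε) ω := by
      by_contra hcon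
      push_neg at hcon
      have hρnT : ρ n (r+ε) ω < T := lt_of_lt_of_le hcon hρi_leT
      have hhit : r + ε ≤ ‖X n (ρ n (r+ε) ω) ω‖ := by
        rw [hρ] at hρnT ⊢
        exact aux_hit (hσmem n ω) (hXcont n ω) (hexpl n ω) hρnT
      have hXile : ‖Xi (ρ n (r+ε) ω) ω‖ ≤ r := by
        have h3 := hcon; rw [hρi] at h3
        exact aux_below (hσimem ω) (hXicont ω) (hexpli ω) hρn_nonneg h3
      have hYX : Y n (r+ε) (ρ n (r+ε) ω) ω = X n (ρ n (r+ε) ω) ω :=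
        hGn n _ ⟨hρn_nonneg, le_refl _⟩
      have hYiXi : Yi (r+ε) (ρ n (r+ε) ω) ω = Xi (ρ n (r+ε) ω) ω :=
        hGi _ ⟨hρn_nonneg, hcon.le.trans hρi_mono⟩
      have h1 : ε ≤ ‖Y n (r+ε) (ρ n (r+ε) ω) ω - Yi (r+ε) (ρ n (r+ε) ω) ω‖ := by
        rw [hYX, hYiXi]
        have h4 := norm_sub_norm_le (X n (ρ n (r+ε) ω) ω) (Xi (ρ n (r+ε) ω) ω)
        linarith
      have h2 := hle_sup _ ⟨hρn_nonneg, hρnT.le⟩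
      exact absurd ((h1.trans h2).trans_lt hYsup_lt) (not_lt.2 (min_le_left _ _))
    have hmin_eq : min (ρi r ω) (ρ n (r+ε) ω) = ρi r ω := min_eq_left hstep1
    have hpt : ∀ s : Set.Icc (0:ℝ) T,
        ‖Set.indicator (Set.Icc 0 (min (ρi r ω) (ρ n (r + ε) ω))) (fun u => X n u ω) (s:ℝ)
          - Set.indicator (Set.Icc 0 (ρi r ω)) (fun u => Xi u ω) (s:ℝ)‖ ≤ Ysup := by
      rintro ⟨s, hs⟩
      simp only [hmin_eq]
      by_cases hsmem : s ∈ Set.Icc 0 (ρi r ω)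
      · rw [Set.indicator_of_mem hsmem, Set.indicator_of_mem hsmem]
        have hX : X n s ω = Y n (r+ε) s ω := (hGn n s ⟨hsmem.1, hsmem.2.trans hstep1⟩).symm
        have hXi' : Xi s ω = Yi (r+ε) s ω := (hGi s ⟨hsmem.1, hsmem.2.trans hρi_mono⟩).symm
        rw [hX, hXi']
        exact hle_sup s hs
      · rw [Set.indicator_of_notMem hsmem, Set.indicator_of_notMem hsmem, sub_zero, norm_zero]
        exact (norm_nonneg _).trans (hle_sup 0 ⟨le_refl _, hT.le⟩)
    have htarget_le : (⨆ t : Set.Icc (0:ℝ) T,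
        ‖Set.indicator (Set.Icc 0 (min (ρi r ω) (ρ n (r + ε) ω))) (fun s => X n s ω) (t:ℝ)
          - Set.indicator (Set.Icc 0 (ρi r ω)) (fun s => Xi s ω) (t:ℝ)‖) ≤ Ysup :=
      ciSup_le hpt
    have hbdd2 : BddAbove (Set.range fun t : Set.Icc (0:ℝ) T =>
        ‖Set.indicator (Set.Icc 0 (min (ρi r ω) (ρ n (r + ε) ω))) (fun s => X n s ω) (t:ℝ)
          - Set.indicator (Set.Icc 0 (ρi r ω)) (fun s => Xi s ω) (t:ℝ)‖) := by
      refine ⟨Ysup, ?_⟩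
      rintro x ⟨s, rfl⟩
      exact hpt s
    have htarget_nonneg : 0 ≤ ⨆ t : Set.Icc (0:ℝ) T,
        ‖Set.indicator (Set.Icc 0 (min (ρi r ω) (ρ n (r + ε) ω))) (fun s => X n s ω) (t:ℝ)
          - Set.indicator (Set.Icc 0 (ρi r ω)) (fun s => Xi s ω) (t:ℝ)‖ :=
      le_trans (norm_nonneg _) (le_ciSup hbdd2 ⟨0, le_refl 0, hT.le⟩)
    rw [Real.dist_0_eq_abs, abs_of_nonneg htarget_nonneg] at hA
    exact absurd ((hA.trans htarget_le).trans_lt hYsup_lt) (not_lt.2 (min_le_right _ _))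
  refine tendsto_of_tendsto_of_tendsto_of_le_of_le tendsto_const_nhds hBtend
    (fun n => zero_le) ?_
  intro n
  have hsub : {x | δ ≤ dist (⨆ t : Set.Icc (0:ℝ) T,
        ‖Set.indicator (Set.Icc 0 (min (ρi r x) (ρ n (r + ε) x))) (fun s => X n s x) (t : ℝ)
          - Set.indicator (Set.Icc 0 (ρi r x)) (fun s => Xi s x) (t : ℝ)‖) 0}
      ⊆ {x | min ε δ ≤ dist (⨆ t : Set.Icc (0:ℝ) T,
        ‖Y n (r+ε) (t : ℝ) x - Yi (r+ε) (t : ℝ) x‖) 0}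
      ∪ {x | ¬ ((∀ m, ∀ t ∈ Set.Icc 0 (ρ m (r+ε) x), Y m (r+ε) t x = X m t x)
        ∧ (∀ t ∈ Set.Icc 0 (ρi (r+ε) x), Yi (r+ε) t x = Xi t x))} := by
    intro ω hω
    by_cases hG : (∀ m, ∀ t ∈ Set.Icc 0 (ρ m (r+ε) ω), Y m (r+ε) t ω = X m t ω)
        ∧ (∀ t ∈ Set.Icc 0 (ρi (r+ε) ω), Yi (r+ε) t ω = Xi t ω)
    · exact Or.inl (key n ω hG.1 hG.2 hω)
    · exact Or.inr hG
  calc P {x | δ ≤ dist (⨆ t : Set.Icc (0:ℝ) T,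
        ‖Set.indicator (Set.Icc 0 (min (ρi r x) (ρ n (r + ε) x))) (fun s => X n s x) (t : ℝ)
          - Set.indicator (Set.Icc 0 (ρi r x)) (fun s => Xi s x) (t : ℝ)‖) 0}
      ≤ P ({x | min ε δ ≤ dist (⨆ t : Set.Icc (0:ℝ) T,
          ‖Y n (r+ε) (t : ℝ) x - Yi (r+ε) (t : ℝ) x‖) 0}
        ∪ {x | ¬ ((∀ m, ∀ t ∈ Set.Icc 0 (ρ m (r+ε) x), Y m (r+ε) t x = X m t x)
          ∧ (∀ t ∈ Set.Icc 0 (ρi (r+ε) x), Yi (r+ε) t x = Xi t x))}) := measure_mono hsub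
    _ ≤ P {x | min ε δ ≤ dist (⨆ t : Set.Icc (0:ℝ) T,
          ‖Y n (r+ε) (t : ℝ) x - Yi (r+ε) (t : ℝ) x‖) 0}
        + P {x | ¬ ((∀ m, ∀ t ∈ Set.Icc 0 (ρ m (r+ε) x), Y m (r+ε) t x = X m t x)
          ∧ (∀ t ∈ Set.Icc 0 (ρi (r+ε) x), Yi (r+ε) t x = Xi t x))} := measure_union_le _ _
    _ = P {x | min ε δ ≤ dist (⨆ t : Set.Icc (0:ℝ) T,
          ‖Y n (r+ε) (t : ℝ) x - Yi (r+ε) (t : ℝ) x‖) 0} := by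
        rw [ae_iff.1 hGae, add_zero]
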